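/- (Mass Stealing Lemma.) Let C be a condensed configuration of n regions on ℝ with density |x|, and suppose the leftmost interval of C (the interval whose left endpoint is the minimum of the union of the intervals) belongs to a region R that also has an interval contained in [0,∞). Then there exists a configuration of n regions with the same list of weighted masses whose total weighted perimeter is strictly smaller than that of C, and in which region R consists of a single interval contained in (−∞,0]. -/

import Mathlib

open MeasureTheory Finset

/-- A configuration of `n` regions made of `k` nondegenerate closed intervals
with pairwise disjoint interiors, each interval labeled by one of the regions. -/
structure Config (n k : ℕ) where
  lo : Fin k → ℝ
  hi : Fin k → ℝ
  lab : Fin k → Fin n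
  nondeg : ∀ j, lo j < hi j
  disj : ∀ i j, i ≠ j → Set.Ioo (lo i) (hi i) ∩ Set.Ioo (lo j) (hi j) = ∅

namespace Config

variable {n k : ℕ}

/-- Weighted mass of region `i` with respect to the density `|x|`. -/
noncomputable def mass (C : Config n k) (i : Fin n) : ℝ :=
  ∑ j ∈ univ.filter (fun j => C.lab j = i), ∫ x in C.lo j..C.hi j, |x|

/-- The (finite) set of all endpoints of intervals of the configuration. -/
noncomputable def endpointSet (C : Config n k) : Finset ℝ :=
  image C.lo univ ∪ image C.hi univ

/-- Total weighted perimeter with respect to the density `|x|`. -/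
noncomputable def perim (C : Config n k) : ℝ :=
  ∑ x ∈ C.endpointSet, |x|

/-- A configuration is condensed if the union of its intervals is a closed interval
containing `0` and each region has at most one interval contained in `(-∞,0]`
and at most one interval contained in `[0,∞)`. -/
def Condensed (C : Config n k) : Prop :=
  (∃ a b : ℝ, a ≤ 0 ∧ 0 ≤ b ∧ (⋃ j, Set.Icc (C.lo j) (C.hi j)) = Set.Icc a b) ∧
  ∀ i : Fin n,
    (univ.filter (fun j => C.lab j = i ∧ C.hi j ≤ 0)).card ≤ 1 ∧
    (univ.filter (fun j => C.lab j = i ∧ 0 ≤ C.lo j)).card ≤ 1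

/-- A configuration is isoperimetric if its total weighted perimeter is least among all
configurations of `n` regions with the same list of weighted masses. -/
def Isoperimetric (C : Config n k) : Prop :=
  ∀ (k' : ℕ) (C' : Config n k'), (∀ i, C'.mass i = C.mass i) → C.perim ≤ C'.perim

end Config

/-! ### Auxiliary material for the proof of the mass stealing lemma -/

section IntAbs

lemma intAbs_neg (p q : ℝ) (hp : p ≤ 0) (hq : q ≤ 0) :
    ∫ x in p..q, |x| = (p^2 - q^2)/2 := by
  have h : ∫ x in p..q, |x| = ∫ x in p..q, -x := by
    apply intervalIntegral.integral_congr
    intro x hx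
    rw [Set.uIcc, Set.mem_Icc] at hx
    have hx0 : x ≤ 0 := le_trans hx.2 (sup_le hp hq)
    simp [abs_of_nonpos hx0]
  rw [h, _root_.intervalIntegral.integral_neg, integral_id]
  ring

lemma intAbs_pos' (p q : ℝ) (hp : 0 ≤ p) (hq : 0 ≤ q) :
    ∫ x in p..q, |x| = (q^2 - p^2)/2 := by
  have h : ∫ x in p..q, |x| = ∫ x in p..q, x := by
    apply intervalIntegral.integral_congr
    intro x hx
    rw [Set.uIcc, Set.mem_Icc] at hx
    have hx0 : 0 ≤ x := le_trans (le_inf hp hq) hx.1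
    simp [abs_of_nonneg hx0]
  rw [h, integral_id]

lemma intAbs (p q : ℝ) : ∫ x in p..q, |x| = (q*|q| - p*|p|)/2 := by
  have hint : ∀ a b : ℝ, IntervalIntegrable (fun x => |x|) volume a b :=
    fun a b => (continuous_abs).intervalIntegrable a b
  have hsplit : ∫ x in p..q, |x| = (∫ x in p..(0:ℝ), |x|) + ∫ x in (0:ℝ)..q, |x| :=
    (intervalIntegral.integral_add_adjacent_intervals (hint p 0) (hint 0 q)).symm
  rcases le_or_gt p 0 with hp | hp <;> rcases le_or_gt q 0 with hq | hq
  · rw [intAbs_neg p q hp hq, abs_of_nonpos hp, abs_of_nonpos hq]; ring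
  · rw [hsplit, intAbs_neg p 0 hp le_rfl, intAbs_pos' 0 q le_rfl hq.le,
      abs_of_nonpos hp, abs_of_nonneg hq.le]; ring
  · rw [hsplit, intAbs_pos' p 0 hp.le le_rfl, intAbs_neg 0 q le_rfl hq,
      abs_of_nonneg hp.le, abs_of_nonpos hq]; ring
  · rw [intAbs_pos' p q hp.le hq.le, abs_of_nonneg hp.le, abs_of_nonneg hq.le]; ring

lemma mulAbs_mono : StrictMono (fun x : ℝ => x * |x|) := by
  intro x y hxy
  rcases le_or_gt 0 x with hx | hx
  · have hy : 0 < y := lt_of_le_of_lt hx hxy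
    simp only [abs_of_nonneg hx, abs_of_pos hy]
    exact mul_self_lt_mul_self hx hxy
  · rcases le_or_gt 0 y with hy | hy
    · have : x * |x| < 0 := by
        simp only [abs_of_neg hx]; nlinarith
      exact lt_of_lt_of_le this (by positivity)
    · simp only [abs_of_neg hx, abs_of_neg hy]
      nlinarith

lemma intAbs_nonneg (p q : ℝ) (h : p ≤ q) : 0 ≤ ∫ x in p..q, |x| := by
  rw [intAbs]
  have := mulAbs_mono.monotone h
  linarith

lemma intAbs_pos (p q : ℝ) (h : p < q) : 0 < ∫ x in p..q, |x| := by
  rw [intAbs]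
  have := mulAbs_mono h
  simp only at this; linarith

end IntAbs

section FmapDefs

/-- The sliding map used in the mass stealing construction. -/
noncomputable def Fmap (u v s d t : ℝ) : ℝ :=
  if d ≤ t then Real.sqrt (t^2 - s) else if t < v then -Real.sqrt (t^2 - u^2) else t

/-- The set on which `Fmap` is monotone. -/
def Sset (u v c d : ℝ) : Set ℝ := Set.Iic u ∪ Set.Icc v c ∪ Set.Ici d

variable {u v s c d : ℝ}

lemma Fmap_eval_Iic (hu : u ≤ 0) (hv : 0 ≤ v) (hd0 : 0 < d) {t : ℝ} (ht : t ≤ u) :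
    Fmap u v s d t = -Real.sqrt (t^2 - u^2) := by
  have ht0 : t ≤ 0 := le_trans ht hu
  have hd : ¬ d ≤ t := by linarith
  rcases lt_or_ge t v with h | h
  · simp [Fmap, hd, h]
  · have h0 : t = 0 := le_antisymm ht0 (le_trans hv h)
    have hu0 : u = 0 := le_antisymm hu (h0 ▸ ht)
    have hvlt : ¬ t < v := not_lt.mpr h
    rw [Fmap, if_neg hd, if_neg hvlt, hu0, h0]
    norm_num

lemma Fmap_eval_Icc (hv : 0 ≤ v) (hcd : c < d) {t : ℝ} (h1 : v ≤ t) (h2 : t ≤ c) :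
    Fmap u v s d t = t := by
  have hd : ¬ d ≤ t := by linarith
  have hv' : ¬ t < v := not_lt.mpr h1
  simp [Fmap, hd, hv']

lemma Fmap_eval_Ici {t : ℝ} (hd : d ≤ t) : Fmap u v s d t = Real.sqrt (t^2 - s) := by
  simp [Fmap, hd]

lemma Fmap_abs_le (hs0 : 0 ≤ s) (t : ℝ) : |Fmap u v s d t| ≤ |t| := by
  unfold Fmap
  split_ifs with h1 h2
  · rw [abs_of_nonneg (Real.sqrt_nonneg _)]
    calc Real.sqrt (t^2 - s) ≤ Real.sqrt (t^2) := Real.sqrt_le_sqrt (by linarith)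
    _ = |t| := Real.sqrt_sq_eq_abs t
  · rw [abs_neg, abs_of_nonneg (Real.sqrt_nonneg _)]
    calc Real.sqrt (t^2 - u^2) ≤ Real.sqrt (t^2) := Real.sqrt_le_sqrt (by nlinarith)
    _ = |t| := Real.sqrt_sq_eq_abs t
  · exact le_refl _

lemma Fmap_nonpos_Iic (hu : u ≤ 0) (hv : 0 ≤ v) (hd0 : 0 < d) {t : ℝ} (ht : t ≤ u) :
    Fmap u v s d t ≤ 0 := by
  rw [Fmap_eval_Iic hu hv hd0 ht]
  simp [Real.sqrt_nonneg]

lemma Fmap_ge_c_Ici (hc : 0 ≤ c) (hs : s = d^2 - c^2) {t : ℝ} (ht : d ≤ t) (hd0 : 0 < d) :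
    c ≤ Fmap u v s d t := by
  rw [Fmap_eval_Ici ht]
  rw [show t^2 - s = c^2 + (t^2 - d^2) by rw [hs]; ring]
  calc c = Real.sqrt (c^2) := (Real.sqrt_sq hc).symm
  _ ≤ _ := Real.sqrt_le_sqrt (by nlinarith)

lemma Fmap_mono (hu : u ≤ 0) (hv : 0 ≤ v) (hvc : v ≤ c) (hcd : c < d)
    (hs : s = d^2 - c^2) {t₁ t₂ : ℝ} (h1 : t₁ ∈ Sset u v c d) (h2 : t₂ ∈ Sset u v c d)
    (h : t₁ ≤ t₂) : Fmap u v s d t₁ ≤ Fmap u v s d t₂ := by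
  have hc : 0 ≤ c := le_trans hv hvc
  have hd0 : 0 < d := lt_of_le_of_lt hc hcd
  rcases h1 with (h1 | h1) | h1 <;> rcases h2 with (h2 | h2) | h2 <;>
    simp only [Set.mem_Iic, Set.mem_Icc, Set.mem_Ici] at h1 h2
  · rw [Fmap_eval_Iic hu hv hd0 h1, Fmap_eval_Iic hu hv hd0 h2, neg_le_neg_iff]
    exact Real.sqrt_le_sqrt (by nlinarith)
  · calc Fmap u v s d t₁ ≤ 0 := Fmap_nonpos_Iic hu hv hd0 h1
    _ ≤ v := hv
    _ ≤ t₂ := h2.1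
    _ = Fmap u v s d t₂ := (Fmap_eval_Icc hv hcd h2.1 h2.2).symm
  · calc Fmap u v s d t₁ ≤ 0 := Fmap_nonpos_Iic hu hv hd0 h1
    _ ≤ Fmap u v s d t₂ := by rw [Fmap_eval_Ici h2]; exact Real.sqrt_nonneg _
  · have : t₁ = t₂ := le_antisymm h (by linarith [h1.1, h2])
    rw [this]
  · rw [Fmap_eval_Icc hv hcd h1.1 h1.2, Fmap_eval_Icc hv hcd h2.1 h2.2]; exact h
  · rw [Fmap_eval_Icc hv hcd h1.1 h1.2]
    exact le_trans h1.2 (Fmap_ge_c_Ici hc hs h2 hd0)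
  · exact absurd (le_trans h1 (le_trans h h2)) (by push_neg; linarith)
  · exact absurd (le_trans h1 h) (by push_neg; linarith [h2.2])
  · rw [Fmap_eval_Ici h1, Fmap_eval_Ici h2]
    exact Real.sqrt_le_sqrt (by nlinarith)

lemma Fmap_strict_Iic (hu : u ≤ 0) (hv : 0 ≤ v) (hd0 : 0 < d) {t₁ t₂ : ℝ}
    (h12 : t₁ < t₂) (h2 : t₂ ≤ u) : Fmap u v s d t₁ < Fmap u v s d t₂ := by
  rw [Fmap_eval_Iic hu hv hd0 (le_trans h12.le h2), Fmap_eval_Iic hu hv hd0 h2, neg_lt_neg_iff]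
  exact Real.sqrt_lt_sqrt (by nlinarith) (by nlinarith)

lemma Fmap_strict_Ici (hc : 0 ≤ c) (hcd : c < d) (hs : s = d^2 - c^2) {t₁ t₂ : ℝ}
    (h1 : d ≤ t₁) (h12 : t₁ < t₂) : Fmap u v s d t₁ < Fmap u v s d t₂ := by
  have hd0 : 0 < d := lt_of_le_of_lt hc hcd
  rw [Fmap_eval_Ici h1, Fmap_eval_Ici (le_trans h1 h12.le)]
  exact Real.sqrt_lt_sqrt (by nlinarith) (by nlinarith)

lemma Fmap_pres_Iic (hu : u ≤ 0) (hv : 0 ≤ v) (hd0 : 0 < d) {p q : ℝ}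
    (hpq : p ≤ q) (hq : q ≤ u) :
    ∫ x in (Fmap u v s d p)..(Fmap u v s d q), |x| = ∫ x in p..q, |x| := by
  rw [Fmap_eval_Iic hu hv hd0 (le_trans hpq hq), Fmap_eval_Iic hu hv hd0 hq, intAbs, intAbs]
  have hq0 : q ≤ 0 := le_trans hq hu
  have hp0 : p ≤ 0 := le_trans hpq hq0
  have h1 : 0 ≤ p^2 - u^2 := by nlinarith
  have h2 : 0 ≤ q^2 - u^2 := by nlinarith
  have e1 : Real.sqrt (p^2-u^2) ^ 2 = p^2 - u^2 := Real.sq_sqrt h1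
  have e2 : Real.sqrt (q^2-u^2) ^ 2 = q^2 - u^2 := Real.sq_sqrt h2
  rw [abs_neg, abs_of_nonneg (Real.sqrt_nonneg _), abs_neg,
    abs_of_nonneg (Real.sqrt_nonneg _), abs_of_nonpos hp0, abs_of_nonpos hq0]
  linear_combination (e1 - e2) / 2

lemma Fmap_pres_Ici (hc : 0 ≤ c) (hcd : c < d) (hs : s = d^2 - c^2) {p q : ℝ}
    (hp : d ≤ p) (hpq : p ≤ q) :
    ∫ x in (Fmap u v s d p)..(Fmap u v s d q), |x| = ∫ x in p..q, |x| := by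
  rw [Fmap_eval_Ici hp, Fmap_eval_Ici (le_trans hp hpq), intAbs, intAbs]
  have hd0 : 0 < d := lt_of_le_of_lt hc hcd
  have hp0 : 0 ≤ p := le_trans hd0.le hp
  have hq0 : 0 ≤ q := le_trans hp0 hpq
  have h1 : 0 ≤ p^2 - s := by nlinarith
  have h2 : 0 ≤ q^2 - s := by nlinarith
  have e1 : Real.sqrt (p^2-s) ^ 2 = p^2 - s := Real.sq_sqrt h1
  have e2 : Real.sqrt (q^2-s) ^ 2 = q^2 - s := Real.sq_sqrt h2
  rw [abs_of_nonneg (Real.sqrt_nonneg _), abs_of_nonneg (Real.sqrt_nonneg _),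
    abs_of_nonneg hp0, abs_of_nonneg hq0]
  linear_combination (e2 - e1) / 2

end FmapDefs

section SumHelpers

lemma sum_insert_abs_le (x : ℝ) (s : Finset ℝ) :
    ∑ y ∈ insert x s, |y| ≤ |x| + ∑ y ∈ s, |y| := by
  by_cases h : x ∈ s
  · rw [Finset.insert_eq_self.mpr h]
    nlinarith [abs_nonneg x]
  · rw [Finset.sum_insert h]

lemma sum_image_abs_le (s : Finset ℝ) (f : ℝ → ℝ) :
    ∑ y ∈ s.image f, |y| ≤ ∑ e ∈ s, |f e| := by
  classical
  induction s using Finset.induction_on with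
  | empty => simp
  | @insert a s' ha ih =>
      rw [Finset.image_insert, Finset.sum_insert ha]
      calc ∑ y ∈ insert (f a) (s'.image f), |y| ≤ |f a| + ∑ y ∈ s'.image f, |y| :=
        sum_insert_abs_le _ _
      _ ≤ |f a| + ∑ e ∈ s', |f e| := by linarith

lemma ioo_disj {p q r t : ℝ} (h : q ≤ r) : Set.Ioo p q ∩ Set.Ioo r t = ∅ := by
  ext x
  simp only [Set.mem_inter_iff, Set.mem_Ioo, Set.mem_empty_iff_false, iff_false]
  rintro ⟨⟨_, h1⟩, h2, _⟩
  linarith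

end SumHelpers

namespace Config

variable {n k : ℕ}

lemma ord (C : Config n k) {i j : Fin k} (h : i ≠ j) :
    C.hi i ≤ C.lo j ∨ C.hi j ≤ C.lo i := by
  by_contra hcon
  push_neg at hcon
  obtain ⟨h1, h2⟩ := hcon
  have hlt : max (C.lo i) (C.lo j) < min (C.hi i) (C.hi j) := by
    rcases max_cases (C.lo i) (C.lo j) with ⟨he, _⟩ | ⟨he, _⟩ <;>
      rcases min_cases (C.hi i) (C.hi j) with ⟨hf, _⟩ | ⟨hf, _⟩ <;>
      rw [he, hf] <;> first | exact C.nondeg i | exact C.nondeg j | exact h2 | exact h1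
  set w := (max (C.lo i) (C.lo j) + min (C.hi i) (C.hi j)) / 2 with hw
  have hw1 : max (C.lo i) (C.lo j) < w := by rw [hw]; linarith
  have hw2 : w < min (C.hi i) (C.hi j) := by rw [hw]; linarith
  have : w ∈ Set.Ioo (C.lo i) (C.hi i) ∩ Set.Ioo (C.lo j) (C.hi j) := by
    constructor <;> constructor
    · exact lt_of_le_of_lt (le_max_left _ _) hw1
    · exact lt_of_lt_of_le hw2 (min_le_left _ _)
    · exact lt_of_le_of_lt (le_max_right _ _) hw1
    · exact lt_of_lt_of_le hw2 (min_le_right _ _)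
  rw [C.disj i j h] at this
  exact this

lemma lo_mem_endpointSet (C : Config n k) (j : Fin k) : C.lo j ∈ C.endpointSet :=
  mem_union_left _ (mem_image_of_mem _ (mem_univ j))

lemma hi_mem_endpointSet (C : Config n k) (j : Fin k) : C.hi j ∈ C.endpointSet :=
  mem_union_right _ (mem_image_of_mem _ (mem_univ j))

/-- kept (non-`R`) slots -/
def keep (C : Config n k) (R : Fin n) : Finset (Fin k) :=
  univ.filter (fun j => C.lab j ≠ R)

noncomputable def kemb (C : Config n k) (R : Fin n) (i : Fin (C.keep R).card) : Fin k :=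
  ((C.keep R).equivFin.symm i : Fin k)

lemma kemb_mem (C : Config n k) (R : Fin n) (i : Fin (C.keep R).card) :
    C.lab (C.kemb R i) ≠ R := by
  have h := ((C.keep R).equivFin.symm i).2
  simp only [keep, mem_filter] at h
  exact h.2

lemma kemb_inj (C : Config n k) (R : Fin n) : Function.Injective (C.kemb R) :=
  fun i j h => (Equiv.injective _) (Subtype.coe_injective h)

lemma keep_sum (C : Config n k) (R : Fin n) (g : Fin k → ℝ) :
    ∑ i : Fin (C.keep R).card, g (C.kemb R i) = ∑ j ∈ C.keep R, g j := by
  rw [← Finset.sum_coe_sort (C.keep R) g]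
  exact Fintype.sum_equiv (C.keep R).equivFin.symm
    (fun i => g (C.kemb R i)) (fun x => g x) (fun i => rfl)

/-- The rebuilt configuration: all non-`R` slots transformed by `G`, and one new
slot `[a', h']` for region `R` appended at the end. -/
noncomputable def steal (C : Config n k) (R : Fin n) (G : ℝ → ℝ) (a' h' : ℝ)
    (H1 : ∀ j, C.lab j ≠ R → G (C.lo j) < G (C.hi j))
    (H2 : ∀ i j, C.lab i ≠ R → C.lab j ≠ R → i ≠ j →
      Set.Ioo (G (C.lo i)) (G (C.hi i)) ∩ Set.Ioo (G (C.lo j)) (G (C.hi j)) = ∅)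
    (H3 : ∀ j, C.lab j ≠ R → Set.Ioo a' h' ∩ Set.Ioo (G (C.lo j)) (G (C.hi j)) = ∅)
    (H4 : a' < h') : Config n ((C.keep R).card + 1) where
  lo := Fin.snoc (fun i => G (C.lo (C.kemb R i))) a'
  hi := Fin.snoc (fun i => G (C.hi (C.kemb R i))) h'
  lab := Fin.snoc (fun i => C.lab (C.kemb R i)) R
  nondeg := by
    intro j
    induction j using Fin.lastCases with
    | last => simpa using H4
    | cast i => simpa using H1 _ (C.kemb_mem R i)
  disj := by
    intro i j hij
    induction i using Fin.lastCases with
    | last =>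
      induction j using Fin.lastCases with
      | last => exact absurd rfl hij
      | cast j' => simpa using H3 _ (C.kemb_mem R j')
    | cast i' =>
      induction j using Fin.lastCases with
      | last =>
        rw [Set.inter_comm]
        simpa using H3 _ (C.kemb_mem R i')
      | cast j' =>
        have hne : i' ≠ j' := fun h => hij (by rw [h])
        simpa using H2 _ _ (C.kemb_mem R i') (C.kemb_mem R j')
          (fun h => hne (C.kemb_inj R h))

variable (C : Config n k) (R : Fin n) (G : ℝ → ℝ) (a' h' : ℝ)
  {H1 : ∀ j, C.lab j ≠ R → G (C.lo j) < G (C.hi j)}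
  {H2 : ∀ i j, C.lab i ≠ R → C.lab j ≠ R → i ≠ j →
      Set.Ioo (G (C.lo i)) (G (C.hi i)) ∩ Set.Ioo (G (C.lo j)) (G (C.hi j)) = ∅}
  {H3 : ∀ j, C.lab j ≠ R → Set.Ioo a' h' ∩ Set.Ioo (G (C.lo j)) (G (C.hi j)) = ∅}
  {H4 : a' < h'}

lemma steal_mass_ne (i : Fin n) (hiR : i ≠ R)
    (H5 : ∀ j, C.lab j ≠ R →
      (∫ x in G (C.lo j)..G (C.hi j), |x|) = ∫ x in C.lo j..C.hi j, |x|) :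
    (C.steal R G a' h' H1 H2 H3 H4).mass i = C.mass i := by
  unfold mass steal
  simp only
  rw [Finset.sum_filter, Fin.sum_univ_castSucc]
  simp only [Fin.snoc_castSucc, Fin.snoc_last]
  rw [if_neg (Ne.symm hiR)]
  rw [add_zero]
  have := C.keep_sum R (fun j => if C.lab j = i then ∫ x in G (C.lo j)..G (C.hi j), |x| else 0)
  rw [this]
  rw [Finset.sum_subset (Finset.subset_univ (C.keep R))]
  · rw [← Finset.sum_filter]
    apply Finset.sum_congr rfl
    intro j hj
    simp only [mem_filter] at hj
    exact H5 j (hj.2 ▸ hiR)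
  · intro j _ hj
    simp only [keep, mem_filter, mem_univ, true_and, not_not] at hj
    rw [if_neg (by rw [hj]; exact Ne.symm hiR)]

lemma steal_mass_R :
    (C.steal R G a' h' H1 H2 H3 H4).mass R = ∫ x in a'..h', |x| := by
  unfold mass steal
  simp only
  rw [Finset.sum_filter, Fin.sum_univ_castSucc]
  simp only [Fin.snoc_castSucc, Fin.snoc_last, if_pos rfl, if_true]
  have : ∀ i' : Fin (C.keep R).card,
      (if C.lab (C.kemb R i') = R then
        ∫ x in G (C.lo (C.kemb R i'))..G (C.hi (C.kemb R i')), |x| else 0) = 0 :=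
    fun i' => if_neg (C.kemb_mem R i')
  rw [Finset.sum_congr rfl (fun i' _ => this i'), Finset.sum_const, smul_zero, zero_add]

lemma steal_lab_iff (j : Fin ((C.keep R).card + 1)) :
    (C.steal R G a' h' H1 H2 H3 H4).lab j = R ↔ j = Fin.last _ := by
  induction j using Fin.lastCases with
  | last => simp [steal]
  | cast i => simp [steal, C.kemb_mem R i, Fin.ne_of_lt (Fin.castSucc_lt_last i)]

lemma steal_hi_last :
    (C.steal R G a' h' H1 H2 H3 H4).hi (Fin.last _) = h' := by
  simp [steal]

lemma steal_endpoint {x : ℝ} (hx : x ∈ (C.steal R G a' h' H1 H2 H3 H4).endpointSet) :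
    x = a' ∨ x = h' ∨ ∃ j, C.lab j ≠ R ∧ (x = G (C.lo j) ∨ x = G (C.hi j)) := by
  simp only [endpointSet, mem_union, mem_image, mem_univ, true_and] at hx
  rcases hx with ⟨j, hj⟩ | ⟨j, hj⟩
  · induction j using Fin.lastCases with
    | last => left; rw [← hj]; simp [steal]
    | cast i =>
        right; right
        exact ⟨C.kemb R i, C.kemb_mem R i, Or.inl (by rw [← hj]; simp [steal])⟩
  · induction j using Fin.lastCases with
    | last => right; left; rw [← hj]; simp [steal]
    | cast i =>
        right; right
        exact ⟨C.kemb R i, C.kemb_mem R i, Or.inr (by rw [← hj]; simp [steal])⟩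

end Config

/-- The assembled construction: given suitable data `u v` and the sliding map facts,
produce the improved configuration. -/
lemma assemble {n k : ℕ} (C : Config n k) (hC : C.Condensed)
    (j₀ : Fin k) (hmin : ∀ j, C.lo j₀ ≤ C.lo j)
    (j₁ : Fin k) (hne : j₁ ≠ j₀) (hlab : C.lab j₁ = C.lab j₀) (hpos : 0 ≤ C.lo j₁)
    (u v : ℝ) (hu : u ≤ 0) (hv : 0 ≤ v) (hvc : v ≤ C.lo j₁)
    (hSmem : ∀ j, C.lab j ≠ C.lab j₀ →
      C.lo j ∈ Sset u v (C.lo j₁) (C.hi j₁) ∧ C.hi j ∈ Sset u v (C.lo j₁) (C.hi j₁))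
    (hpres : ∀ j, C.lab j ≠ C.lab j₀ →
      (∫ x in (Fmap u v ((C.hi j₁)^2 - (C.lo j₁)^2) (C.hi j₁) (C.lo j))..
        (Fmap u v ((C.hi j₁)^2 - (C.lo j₁)^2) (C.hi j₁) (C.hi j)), |x|)
        = ∫ x in C.lo j..C.hi j, |x|)
    (hndF : ∀ j, C.lab j ≠ C.lab j₀ →
      Fmap u v ((C.hi j₁)^2 - (C.lo j₁)^2) (C.hi j₁) (C.lo j)
        < Fmap u v ((C.hi j₁)^2 - (C.lo j₁)^2) (C.hi j₁) (C.hi j))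
    (hMR : 2 * C.mass (C.lab j₀)
        + (Fmap u v ((C.hi j₁)^2 - (C.lo j₁)^2) (C.hi j₁) (min (C.hi j₀) u))^2
        ≤ (C.lo j₀)^2 + (C.hi j₁)^2)
    (hH : Fmap u v ((C.hi j₁)^2 - (C.lo j₁)^2) (C.hi j₁) (min (C.hi j₀) u) = 0
        ∨ min (C.hi j₀) u = C.hi j₀) :
    ∃ (k' : ℕ) (C' : Config n k'),
      (∀ i, C'.mass i = C.mass i) ∧
      C'.perim < C.perim ∧
      (∃! j : Fin k', C'.lab j = C.lab j₀) ∧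
      (∀ j : Fin k', C'.lab j = C.lab j₀ → C'.hi j ≤ 0) := by
  classical
  set R := C.lab j₀ with hR
  set a := C.lo j₀ with ha
  set h₀ := C.hi j₀ with hh₀
  set c := C.lo j₁ with hcc
  set d := C.hi j₁ with hdd
  set s := d^2 - c^2 with hs
  have hcd : c < d := C.nondeg j₁
  have hc0 : (0:ℝ) ≤ c := hpos
  have hd0 : (0:ℝ) < d := lt_of_le_of_lt hc0 hcd
  have hs0 : 0 ≤ s := by rw [hs]; nlinarith
  have ha0 : a < 0 := by
    obtain ⟨⟨A, B, hA, hB, hUn⟩, hcard⟩ := hC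
    have h0mem : (0:ℝ) ∈ Set.Icc A B := Set.mem_Icc.mpr ⟨hA, hB⟩
    rw [← hUn] at h0mem
    obtain ⟨j, hj⟩ := Set.mem_iUnion.mp h0mem
    have hale : a ≤ 0 := le_trans (hmin j) (Set.mem_Icc.mp hj).1
    rcases lt_or_eq_of_le hale with h | h
    · exact h
    · exfalso
      have hcard2 := (hcard R).2
      have hmem0 : j₀ ∈ univ.filter (fun j => C.lab j = R ∧ 0 ≤ C.lo j) :=
        mem_filter.mpr ⟨mem_univ _, rfl, le_of_eq h.symm⟩
      have hmem1 : j₁ ∈ univ.filter (fun j => C.lab j = R ∧ 0 ≤ C.lo j) :=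
        mem_filter.mpr ⟨mem_univ _, hlab, hpos⟩
      exact hne (Finset.card_le_one.mp hcard2 _ hmem1 _ hmem0)
  set Fm := Fmap u v s d with hFm
  set H := min h₀ u with hHdef
  set h' := Fm H with hh'
  set M := C.mass R with hM
  have hMpos : 0 < M := by
    rw [hM]
    unfold Config.mass
    have hj₀mem : j₀ ∈ univ.filter (fun j => C.lab j = R) := by simp [hR]
    calc (0:ℝ) < ∫ x in C.lo j₀..C.hi j₀, |x| := intAbs_pos _ _ (C.nondeg j₀)
    _ ≤ _ := Finset.single_le_sum
        (fun j _ => intAbs_nonneg _ _ (C.nondeg j).le) hj₀mem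
  set a' := -Real.sqrt (h'^2 + 2*M) with ha'
  have hargnn : 0 ≤ h'^2 + 2*M := by nlinarith [sq_nonneg h']
  have ha'sq : a'^2 = h'^2 + 2*M := by rw [ha', neg_sq, Real.sq_sqrt hargnn]
  have hHu : H ≤ u := min_le_right _ _
  have hh'0 : h' ≤ 0 := Fmap_nonpos_Iic hu hv hd0 hHu
  have ha'h' : a' < h' := by
    have h1 : Real.sqrt (h'^2) < Real.sqrt (h'^2 + 2*M) :=
      Real.sqrt_lt_sqrt (sq_nonneg _) (by linarith)
    rw [Real.sqrt_sq_eq_abs, abs_of_nonpos hh'0] at h1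
    rw [ha']; linarith
  have ha'0 : a' ≤ 0 := by
    rw [ha']; simp [Real.sqrt_nonneg]
  have hlo_ge : ∀ j, C.lab j ≠ R → h₀ ≤ C.lo j := by
    intro j hj
    have hjne : j ≠ j₀ := fun h => hj (h ▸ rfl)
    rcases C.ord hjne with h | h
    · exfalso
      have := hmin j
      have := C.nondeg j
      rw [← ha] at h
      linarith
    · exact h
  have hHS : H ∈ Sset u v c d := Or.inl (Or.inl hHu)
  have hkord : ∀ j, C.lab j ≠ R → C.hi j ≤ c ∨ d ≤ C.lo j := by
    intro j hj
    have hjne : j ≠ j₁ := fun h => hj (h ▸ hlab)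
    rcases C.ord hjne with h | h
    · exact Or.inl h
    · exact Or.inr h
  have H2 : ∀ i j, C.lab i ≠ R → C.lab j ≠ R → i ≠ j →
      Set.Ioo (Fm (C.lo i)) (Fm (C.hi i)) ∩ Set.Ioo (Fm (C.lo j)) (Fm (C.hi j)) = ∅ := by
    intro i j hi hj hij
    rcases C.ord hij with h | h
    · exact ioo_disj (Fmap_mono hu hv hvc hcd hs (hSmem i hi).2 (hSmem j hj).1 h)
    · rw [Set.inter_comm]
      exact ioo_disj (Fmap_mono hu hv hvc hcd hs (hSmem j hj).2 (hSmem i hi).1 h)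
  have H3 : ∀ j, C.lab j ≠ R → Set.Ioo a' h' ∩ Set.Ioo (Fm (C.lo j)) (Fm (C.hi j)) = ∅ := by
    intro j hj
    exact ioo_disj (Fmap_mono hu hv hvc hcd hs hHS (hSmem j hj).1
      (le_trans (min_le_left _ _) (hlo_ge j hj)))
  refine ⟨_, C.steal R Fm a' h' hndF H2 H3 ha'h', ?_, ?_, ?_, ?_⟩
  · -- masses
    intro i
    by_cases hiR : i = R
    · subst hiR
      rw [C.steal_mass_R, intAbs, abs_of_nonpos hh'0, abs_of_nonpos ha'0]
      rw [← hM]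
      linear_combination ha'sq / 2
    · exact C.steal_mass_ne R Fm a' h' i hiR hpres
  · -- perimeter
    set E := C.endpointSet with hE
    have haE : a ∈ E := C.lo_mem_endpointSet j₀
    have hdE : d ∈ E := C.hi_mem_endpointSet j₁
    have hadne : a ≠ d := by linarith
    set E₀ := (E.erase a).erase d with hE₀
    have hdE' : d ∈ E.erase a := Finset.mem_erase.mpr ⟨fun h => hadne h.symm, hdE⟩
    have hsplit : C.perim = |a| + (|d| + ∑ e ∈ E₀, |e|) := by
      rw [Config.perim, ← Finset.add_sum_erase _ _ haE, ← Finset.add_sum_erase _ _ hdE']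
    have hcE₀ : c ∈ E₀ := by
      refine Finset.mem_erase.mpr ⟨ne_of_lt hcd, Finset.mem_erase.mpr ⟨?_, C.lo_mem_endpointSet j₁⟩⟩
      intro h; rw [← h] at ha0; linarith
    have hFmc : Fm c = c := Fmap_eval_Icc hv hcd hvc le_rfl
    have hFmd : Fm d = c := by
      rw [hFm, Fmap_eval_Ici le_rfl, show d^2 - s = c^2 by rw [hs]; ring, Real.sqrt_sq hc0]
    have hsub : (C.steal R Fm a' h' hndF H2 H3 ha'h').endpointSet ⊆
        insert a' (insert (0:ℝ) (E₀.image Fm)) := by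
      intro x hx
      rcases C.steal_endpoint R Fm a' h' hx with h | h | ⟨j, hj, h | h⟩
      · rw [h]; exact Finset.mem_insert_self _ _
      · subst h
        rcases hH with h0 | hH0
        · exact Finset.mem_insert.mpr (Or.inr (Finset.mem_insert.mpr (Or.inl h0)))
        · have hh₀E₀ : h₀ ∈ E₀ := by
            refine Finset.mem_erase.mpr ⟨?_, Finset.mem_erase.mpr
              ⟨ne_of_gt (C.nondeg j₀), C.hi_mem_endpointSet j₀⟩⟩
            have : h₀ ≤ u := by rw [← hH0]; exact min_le_right _ _
            intro hcon; rw [hcon] at this; linarith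
          refine Finset.mem_insert_of_mem (Finset.mem_insert_of_mem
            (Finset.mem_image.mpr ⟨h₀, hh₀E₀, ?_⟩))
          rw [hh', hH0]
      · by_cases hld : C.lo j = d
        · rw [h, hld, hFmd, ← hFmc]
          exact Finset.mem_insert_of_mem (Finset.mem_insert_of_mem
            (Finset.mem_image_of_mem _ hcE₀))
        · have hloE₀ : C.lo j ∈ E₀ := by
            refine Finset.mem_erase.mpr ⟨hld, Finset.mem_erase.mpr ⟨?_, C.lo_mem_endpointSet j⟩⟩
            have h1 := hlo_ge j hj
            have h2 := C.nondeg j₀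
            rw [← ha, ← hh₀] at h2
            intro hcon; rw [hcon] at h1; linarith
          rw [h]
          exact Finset.mem_insert_of_mem (Finset.mem_insert_of_mem
            (Finset.mem_image_of_mem _ hloE₀))
      · have hhiE₀ : C.hi j ∈ E₀ := by
          refine Finset.mem_erase.mpr ⟨?_, Finset.mem_erase.mpr ⟨?_, C.hi_mem_endpointSet j⟩⟩
          · rcases hkord j hj with hcase | hcase
            · intro hcon; rw [hcon] at hcase; linarith
            · have := C.nondeg j
              intro hcon; rw [hcon] at this; linarith
          · have h1 := hlo_ge j hj
            have h2 := C.nondeg j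
            have h3 := C.nondeg j₀
            rw [← ha, ← hh₀] at h3
            intro hcon; rw [hcon] at h2; linarith
        rw [h]
        exact Finset.mem_insert_of_mem (Finset.mem_insert_of_mem
          (Finset.mem_image_of_mem _ hhiE₀))
    have hb1 : (C.steal R Fm a' h' hndF H2 H3 ha'h').perim ≤
        ∑ x ∈ insert a' (insert (0:ℝ) (E₀.image Fm)), |x| :=
      Finset.sum_le_sum_of_subset_of_nonneg hsub (fun x _ _ => abs_nonneg x)
    have hb2 : ∑ x ∈ insert a' (insert (0:ℝ) (E₀.image Fm)), |x| ≤
        |a'| + ∑ x ∈ insert (0:ℝ) (E₀.image Fm), |x| := sum_insert_abs_le _ _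
    have hb3 : ∑ x ∈ insert (0:ℝ) (E₀.image Fm), |x| ≤
        |(0:ℝ)| + ∑ x ∈ E₀.image Fm, |x| := sum_insert_abs_le _ _
    have hb4 : ∑ x ∈ E₀.image Fm, |x| ≤ ∑ e ∈ E₀, |Fm e| := sum_image_abs_le _ _
    have hb5 : ∑ e ∈ E₀, |Fm e| ≤ ∑ e ∈ E₀, |e| :=
      Finset.sum_le_sum (fun e _ => Fmap_abs_le hs0 e)
    have hfin : |a'| < |a| + d := by
      have h1 : |a'| = Real.sqrt (h'^2 + 2*M) := by
        rw [ha', abs_neg, abs_of_nonneg (Real.sqrt_nonneg _)]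
      have h2 : Real.sqrt (h'^2 + 2*M) ≤ Real.sqrt (a^2 + d^2) := by
        apply Real.sqrt_le_sqrt
        rw [hM]; linarith [hMR]
      have h3 : Real.sqrt (a^2 + d^2) < |a| + d := by
        have habs : |a| = -a := abs_of_neg ha0
        rw [habs]
        rw [Real.sqrt_lt' (by linarith)]
        nlinarith
      linarith
    have hd' : |d| = d := abs_of_pos hd0
    rw [hsplit]
    have h0abs : |(0:ℝ)| = 0 := abs_zero
    linarith
  · -- unique R slot
    refine ⟨Fin.last _, (C.steal_lab_iff R Fm a' h' _).mpr rfl,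
      fun j hj => (C.steal_lab_iff R Fm a' h' j).mp hj⟩
  · -- hi ≤ 0
    intro j hj
    rw [(C.steal_lab_iff R Fm a' h' j).mp hj, C.steal_hi_last]
    exact hh'0

theorem mass_stealing (n k : ℕ) (C : Config n k) (hC : C.Condensed)
    (j₀ : Fin k) (hmin : ∀ j, C.lo j₀ ≤ C.lo j)
    (j₁ : Fin k) (hne : j₁ ≠ j₀) (hlab : C.lab j₁ = C.lab j₀) (hpos : 0 ≤ C.lo j₁) :
    ∃ (k' : ℕ) (C' : Config n k'),
      (∀ i, C'.mass i = C.mass i) ∧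
      C'.perim < C.perim ∧
      (∃! j : Fin k', C'.lab j = C.lab j₀) ∧
      (∀ j : Fin k', C'.lab j = C.lab j₀ → C'.hi j ≤ 0) := by
  classical
  have hc0 : (0:ℝ) ≤ C.lo j₁ := hpos
  have hcd : C.lo j₁ < C.hi j₁ := C.nondeg j₁
  have hd0 : (0:ℝ) < C.hi j₁ := lt_of_le_of_lt hc0 hcd
  have hlo_ge : ∀ j, C.lab j ≠ C.lab j₀ → C.hi j₀ ≤ C.lo j := by
    intro j hj
    have hjne : j ≠ j₀ := fun h => hj (h ▸ rfl)
    rcases C.ord hjne with h | h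
    · exfalso; linarith [hmin j, C.nondeg j]
    · exact h
  have hkord : ∀ j, C.lab j ≠ C.lab j₀ → C.hi j ≤ C.lo j₁ ∨ C.hi j₁ ≤ C.lo j := by
    intro j hj
    have hjne : j ≠ j₁ := fun h => hj (h ▸ hlab)
    exact C.ord hjne
  have hh₀c : C.hi j₀ ≤ C.lo j₁ := by
    rcases C.ord (Ne.symm hne) with h | h
    · exact h
    · exfalso; linarith [hmin j₁, hcd]
  have hcard := hC.2 (C.lab j₀)
  have hposuniq : ∀ j, C.lab j = C.lab j₀ → 0 ≤ C.lo j → j = j₁ := by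
    intro j hjR hj0
    exact Finset.card_le_one.mp hcard.2 _ (mem_filter.mpr ⟨mem_univ _, hjR, hj0⟩) _
      (mem_filter.mpr ⟨mem_univ _, hlab, hpos⟩)
  have hneguniq : C.hi j₀ ≤ 0 → ∀ j, C.lab j = C.lab j₀ → C.hi j ≤ 0 → j = j₀ := by
    intro hh j hjR hj0
    exact Finset.card_le_one.mp hcard.1 _ (mem_filter.mpr ⟨mem_univ _, hjR, hj0⟩) _
      (mem_filter.mpr ⟨mem_univ _, rfl, hh⟩)
  by_cases hex : ∃ jm, C.lab jm = C.lab j₀ ∧ jm ≠ j₀ ∧ jm ≠ j₁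
  · -- Case with a third (straddling) interval of the region
    obtain ⟨jm, hjmR, hjm0, hjm1⟩ := hex
    have hh₀u : C.hi j₀ ≤ C.lo jm := by
      rcases C.ord (Ne.symm hjm0) with h | h
      · exact h
      · exfalso; linarith [hmin jm, C.nondeg jm]
    have hu : C.lo jm < 0 := by
      by_contra hcon; push_neg at hcon
      exact hjm1 (hposuniq jm hjmR hcon)
    have hh₀0 : C.hi j₀ ≤ 0 := le_trans hh₀u hu.le
    have hv : (0:ℝ) < C.hi jm := by
      by_contra hcon; push_neg at hcon
      exact hjm0 (hneguniq hh₀0 jm hjmR hcon)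
    have hvc : C.hi jm ≤ C.lo j₁ := by
      rcases C.ord hjm1 with h | h
      · exact h
      · exfalso
        exact hjm1 (hposuniq jm hjmR (by linarith))
    have hkm : ∀ j, C.lab j ≠ C.lab j₀ → C.hi j ≤ C.lo jm ∨ C.hi jm ≤ C.lo j := by
      intro j hj
      have hjne : j ≠ jm := fun h => hj (h ▸ hjmR)
      exact C.ord hjne
    refine assemble C hC j₀ hmin j₁ hne hlab hpos (C.lo jm) (C.hi jm) hu.le hv.le hvc
      ?_ ?_ ?_ ?_ ?_
    · -- hSmem
      intro j hj
      rcases hkm j hj with h | h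
      · exact ⟨Or.inl (Or.inl (le_trans (C.nondeg j).le h)), Or.inl (Or.inl h)⟩
      · rcases hkord j hj with h2 | h2
        · exact ⟨Or.inl (Or.inr ⟨h, le_trans (C.nondeg j).le h2⟩),
            Or.inl (Or.inr ⟨le_trans h (C.nondeg j).le, h2⟩)⟩
        · exact ⟨Or.inr h2, Or.inr (le_trans h2 (C.nondeg j).le)⟩
    · -- hpres
      intro j hj
      rcases hkord j hj with h2 | h2
      · rcases hkm j hj with h | h
        · exact Fmap_pres_Iic hu.le hv.le hd0 (C.nondeg j).le h
        · rw [Fmap_eval_Icc hv.le hcd h (le_trans (C.nondeg j).le h2),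
            Fmap_eval_Icc hv.le hcd (le_trans h (C.nondeg j).le) h2]
      · exact Fmap_pres_Ici hc0 hcd rfl h2 (C.nondeg j).le
    · -- hndF
      intro j hj
      rcases hkord j hj with h2 | h2
      · rcases hkm j hj with h | h
        · exact Fmap_strict_Iic hu.le hv.le hd0 (C.nondeg j) h
        · rw [Fmap_eval_Icc hv.le hcd h (le_trans (C.nondeg j).le h2),
            Fmap_eval_Icc hv.le hcd (le_trans h (C.nondeg j).le) h2]
          exact C.nondeg j
      · exact Fmap_strict_Ici hc0 hcd rfl h2 (C.nondeg j)
    · -- hMR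
      have hfilter : univ.filter (fun j => C.lab j = C.lab j₀) = {j₀, j₁, jm} := by
        ext j
        simp only [mem_filter, mem_univ, true_and, mem_insert, mem_singleton]
        constructor
        · intro hjR
          by_contra hcon
          push_neg at hcon
          obtain ⟨c1, c2, c3⟩ := hcon
          rcases le_or_gt (C.hi j) 0 with hcase | hcase
          · exact c1 (hneguniq hh₀0 j hjR hcase)
          · rcases le_or_gt 0 (C.lo j) with hcase2 | hcase2
            · exact c2 (hposuniq j hjR hcase2)
            · rcases C.ord c3 with h | h
              · linarith
              · linarith
        · rintro (h | h | h) <;> rw [h]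
          · exact hlab
          · exact hjmR
      have hj₀ni : j₀ ∉ ({j₁, jm} : Finset (Fin k)) := by
        simp only [mem_insert, mem_singleton]
        push_neg
        exact ⟨Ne.symm hne, Ne.symm hjm0⟩
      have hj₁ni : j₁ ∉ ({jm} : Finset (Fin k)) := by
        simp only [mem_singleton]
        exact Ne.symm hjm1
      have hmassR : C.mass (C.lab j₀) = (∫ x in C.lo j₀..C.hi j₀, |x|) +
          ((∫ x in C.lo j₁..C.hi j₁, |x|) + (∫ x in C.lo jm..C.hi jm, |x|)) := by
        rw [Config.mass, hfilter, Finset.sum_insert hj₀ni, Finset.sum_insert hj₁ni,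
          Finset.sum_singleton]
      have ha0 : C.lo j₀ < 0 := lt_of_le_of_lt (hmin jm) hu
      have hH' : min (C.hi j₀) (C.lo jm) = C.hi j₀ := min_eq_left hh₀u
      rw [hmassR, intAbs, intAbs, intAbs, hH',
        Fmap_eval_Iic hu.le hv.le hd0 hh₀u, neg_sq,
        Real.sq_sqrt (by nlinarith [C.nondeg j₀] : (0:ℝ) ≤ (C.hi j₀)^2 - (C.lo jm)^2),
        abs_of_nonpos hh₀0, abs_of_neg ha0, abs_of_nonneg hc0, abs_of_pos hd0,
        abs_of_pos hv, abs_of_neg hu]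
      nlinarith [hvc, hv.le, hc0]
    · -- hH
      exact Or.inr (min_eq_left hh₀u)
  · -- Case with no third interval of the region
    push_neg at hex
    have Fid : ∀ t, C.hi j₀ ≤ t → t ≤ C.lo j₁ →
        Fmap 0 (max (C.hi j₀) 0) ((C.hi j₁)^2 - (C.lo j₁)^2) (C.hi j₁) t = t := by
      intro t h1 h2
      rcases le_or_gt t 0 with ht | ht
      · rw [Fmap_eval_Iic le_rfl (le_max_right _ _) hd0 ht,
          show t^2 - (0:ℝ)^2 = t^2 by ring, Real.sqrt_sq_eq_abs, abs_of_nonpos ht, neg_neg]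
      · have hnv : ¬ t < max (C.hi j₀) 0 := by
          simp only [lt_max_iff]
          push_neg
          exact ⟨h1, ht.le⟩
        have hnd : ¬ C.hi j₁ ≤ t := not_le.mpr (lt_of_le_of_lt h2 hcd)
        unfold Fmap
        rw [if_neg hnd, if_neg hnv]
    refine assemble C hC j₀ hmin j₁ hne hlab hpos 0 (max (C.hi j₀) 0) le_rfl
      (le_max_right _ _) (max_le hh₀c hc0) ?_ ?_ ?_ ?_ ?_
    · -- hSmem
      intro j hj
      rcases hkord j hj with h2 | h2
      · have hlo := hlo_ge j hj
        have hhi : C.hi j₀ ≤ C.hi j := le_trans hlo (C.nondeg j).le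
        constructor
        · rcases le_or_gt (C.lo j) 0 with ht | ht
          · exact Or.inl (Or.inl ht)
          · exact Or.inl (Or.inr ⟨max_le hlo ht.le, le_trans (C.nondeg j).le h2⟩)
        · rcases le_or_gt (C.hi j) 0 with ht | ht
          · exact Or.inl (Or.inl ht)
          · exact Or.inl (Or.inr ⟨max_le hhi ht.le, h2⟩)
      · exact ⟨Or.inr h2, Or.inr (le_trans h2 (C.nondeg j).le)⟩
    · -- hpres
      intro j hj
      rcases hkord j hj with h2 | h2
      · rw [Fid _ (hlo_ge j hj) (le_trans (C.nondeg j).le h2),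
          Fid _ (le_trans (hlo_ge j hj) (C.nondeg j).le) h2]
      · exact Fmap_pres_Ici hc0 hcd rfl h2 (C.nondeg j).le
    · -- hndF
      intro j hj
      rcases hkord j hj with h2 | h2
      · rw [Fid _ (hlo_ge j hj) (le_trans (C.nondeg j).le h2),
          Fid _ (le_trans (hlo_ge j hj) (C.nondeg j).le) h2]
        exact C.nondeg j
      · exact Fmap_strict_Ici hc0 hcd rfl h2 (C.nondeg j)
    · -- hMR
      have hfilter : univ.filter (fun j => C.lab j = C.lab j₀) = {j₀, j₁} := by
        ext j
        simp only [mem_filter, mem_univ, true_and, mem_insert, mem_singleton]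
        constructor
        · intro hjR
          by_contra hcon
          push_neg at hcon
          exact hcon.2 (hex j hjR hcon.1)
        · rintro (h | h) <;> rw [h]
          exact hlab
      have hj₀ni : j₀ ∉ ({j₁} : Finset (Fin k)) := by
        simp only [mem_singleton]
        exact Ne.symm hne
      have hmassR : C.mass (C.lab j₀) = (∫ x in C.lo j₀..C.hi j₀, |x|) +
          (∫ x in C.lo j₁..C.hi j₁, |x|) := by
        rw [Config.mass, hfilter, Finset.sum_insert hj₀ni, Finset.sum_singleton]
      rcases le_or_gt (C.hi j₀) 0 with hh | hh
      · have ha0 : C.lo j₀ < 0 := lt_of_lt_of_le (C.nondeg j₀) hh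
        have hH' : min (C.hi j₀) (0:ℝ) = C.hi j₀ := min_eq_left hh
        rw [hmassR, intAbs, intAbs, hH', Fid _ le_rfl (le_trans hh hc0),
          abs_of_nonpos hh, abs_of_neg ha0, abs_of_nonneg hc0, abs_of_pos hd0]
        nlinarith [hc0]
      · have ha0 : C.lo j₀ < 0 := by
          by_contra hcon; push_neg at hcon
          exact hne (hposuniq j₀ rfl hcon).symm
        have hH' : min (C.hi j₀) (0:ℝ) = 0 := min_eq_right hh.le
        have hF0 : Fmap 0 (max (C.hi j₀) 0) ((C.hi j₁)^2 - (C.lo j₁)^2) (C.hi j₁) 0 = 0 := by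
          rw [Fmap_eval_Iic le_rfl (le_max_right _ _) hd0 le_rfl]
          norm_num
        rw [hmassR, intAbs, intAbs, hH', hF0,
          abs_of_pos hh, abs_of_neg ha0, abs_of_nonneg hc0, abs_of_pos hd0]
        nlinarith [hh₀c, hh]
    · -- hH
      rcases le_or_gt (C.hi j₀) 0 with hh | hh
      · exact Or.inr (min_eq_left hh)
      · left
        rw [min_eq_right hh.le, Fmap_eval_Iic le_rfl (le_max_right _ _) hd0 le_rfl]
        norm_num
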